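/- For every even integer n ≥ 4, in the presented group G_n = ⟨R₁, ..., R_{n-1} | braid relations, far commutation, R₁² = R₂ R₁² R₂⟩, the element R₁² R₃² R₅² ⋯ R_{n-1}² (the product of the squares of the odd-indexed generators) is central. -/

import Mathlib

/-- The relators of the presentation
`⟨R₁, …, R_{n-1} | RᵢRᵢ₊₁Rᵢ = Rᵢ₊₁RᵢRᵢ₊₁ (1 ≤ i ≤ n-2); RᵢRⱼ = RⱼRᵢ (|i-j| ≥ 2);
R₁² = R₂R₁²R₂⟩`, as elements of the free group on `n - 1` generators
(indexed by `Fin (n-1)`, the generator `Rᵢ` being `FreeGroup.of ⟨i-1, _⟩`). -/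
def spinOctRels (n : ℕ) : Set (FreeGroup (Fin (n - 1))) :=
  { r | (∃ i j : Fin (n - 1), (j : ℕ) = (i : ℕ) + 1 ∧
          r = (FreeGroup.of i * FreeGroup.of j * FreeGroup.of i) *
              (FreeGroup.of j * FreeGroup.of i * FreeGroup.of j)⁻¹) ∨
        (∃ i j : Fin (n - 1), (i : ℕ) + 2 ≤ (j : ℕ) ∧
          r = (FreeGroup.of i * FreeGroup.of j) * (FreeGroup.of j * FreeGroup.of i)⁻¹) ∨
        (∃ i j : Fin (n - 1), (i : ℕ) = 0 ∧ (j : ℕ) = 1 ∧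
          r = (FreeGroup.of i) ^ 2 *
              (FreeGroup.of j * (FreeGroup.of i) ^ 2 * FreeGroup.of j)⁻¹) }

namespace SpinOctAux

/-- Total version of the generators: `gen n i` is the `i`-th generator, or `1` if out of range. -/
def gen (n : ℕ) (i : ℕ) : PresentedGroup (spinOctRels n) :=
  if h : i < n - 1 then PresentedGroup.of ⟨i, h⟩ else 1

lemma gen_eq {n i : ℕ} (h : i < n - 1) : gen n i = PresentedGroup.of ⟨i, h⟩ := dif_pos h

lemma gen_val {n : ℕ} (i : Fin (n - 1)) :
    gen n (i : ℕ) = PresentedGroup.of (rels := spinOctRels n) i := by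
  rw [gen_eq i.isLt]

lemma mk_rel_one {n : ℕ} {r : FreeGroup (Fin (n - 1))} (h : r ∈ spinOctRels n) :
    PresentedGroup.mk (spinOctRels n) r = 1 :=
  (QuotientGroup.eq_one_iff r).mpr (Subgroup.subset_normalClosure h)

lemma gen_braid {n : ℕ} (i : ℕ) (h : i + 1 < n - 1) :
    gen n i * gen n (i + 1) * gen n i = gen n (i + 1) * gen n i * gen n (i + 1) := by
  have hi : i < n - 1 := by omega
  have h1 := mk_rel_one (n := n)
    (Or.inl ⟨⟨i, hi⟩, ⟨i + 1, h⟩, rfl, rfl⟩)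
  rw [map_mul, map_inv, mul_inv_eq_one] at h1
  simp only [map_mul] at h1
  rw [gen_eq hi, gen_eq h]
  exact h1

lemma gen_comm {n : ℕ} {i j : ℕ} (hij : i + 2 ≤ j) :
    gen n i * gen n j = gen n j * gen n i := by
  by_cases hj : j < n - 1
  · have hi : i < n - 1 := by omega
    have h1 := mk_rel_one (n := n)
      (Or.inr (Or.inl ⟨⟨i, hi⟩, ⟨j, hj⟩, hij, rfl⟩))
    rw [map_mul, map_inv, mul_inv_eq_one] at h1
    simp only [map_mul] at h1
    rw [gen_eq hi, gen_eq hj]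
    exact h1
  · have : gen n j = 1 := dif_neg hj
    rw [this, mul_one, one_mul]

lemma gen_sq0 {n : ℕ} (h : 1 < n - 1) :
    gen n 0 ^ 2 = gen n 1 * gen n 0 ^ 2 * gen n 1 := by
  have h0 : 0 < n - 1 := by omega
  have h1 := mk_rel_one (n := n)
    (Or.inr (Or.inr ⟨⟨0, h0⟩, ⟨1, h⟩, rfl, rfl, rfl⟩))
  rw [map_mul, map_inv, mul_inv_eq_one] at h1
  simp only [map_mul, map_pow] at h1
  rw [gen_eq h0, gen_eq h]
  exact h1

section GroupLemmas

variable {G : Type*} [Group G]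

lemma conj_sq_rel {d a b x y : G} (hx : d * a * d⁻¹ = x) (hy : d * b * d⁻¹ = y)
    (h : a ^ 2 = b * a ^ 2 * b) : x ^ 2 = y * x ^ 2 * y := by
  subst hx hy
  calc (d * a * d⁻¹) ^ 2 = d * a ^ 2 * d⁻¹ := by simp [pow_two, mul_assoc]
    _ = d * (b * a ^ 2 * b) * d⁻¹ := by rw [← h]
    _ = (d * b * d⁻¹) * (d * a * d⁻¹) ^ 2 * (d * b * d⁻¹) := by simp [pow_two, mul_assoc]

lemma conj_cycle₁ {a b c : G} (hab : a * b * a = b * a * b) (hac : a * c = c * a) :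
    (a * b * c) * a * (a * b * c)⁻¹ = b := by
  calc (a * b * c) * a * (a * b * c)⁻¹
      = a * b * (c * a) * c⁻¹ * b⁻¹ * a⁻¹ := by simp [mul_assoc]
    _ = a * b * (a * c) * c⁻¹ * b⁻¹ * a⁻¹ := by rw [hac]
    _ = (a * b * a) * (b⁻¹ * a⁻¹) := by simp [mul_assoc]
    _ = (b * a * b) * (b⁻¹ * a⁻¹) := by rw [hab]
    _ = b := by simp [mul_assoc]

lemma conj_cycle₂ {a b c : G} (hbc : b * c * b = c * b * c) (hac : a * c = c * a) :
    (a * b * c) * b * (a * b * c)⁻¹ = c := by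
  calc (a * b * c) * b * (a * b * c)⁻¹
      = a * ((b * c * b) * c⁻¹ * b⁻¹) * a⁻¹ := by simp [mul_assoc]
    _ = a * ((c * b * c) * c⁻¹ * b⁻¹) * a⁻¹ := by rw [hbc]
    _ = a * c * a⁻¹ := by simp [mul_assoc]
    _ = c := by rw [hac]; simp [mul_assoc]

lemma conj_swap₁ {a b : G} (hab : a * b * a = b * a * b) :
    (a * b * a) * a * (a * b * a)⁻¹ = b := by
  calc (a * b * a) * a * (a * b * a)⁻¹
      = (a * b * a) * (b⁻¹ * a⁻¹) := by simp [mul_assoc]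
    _ = (b * a * b) * (b⁻¹ * a⁻¹) := by rw [hab]
    _ = b := by simp [mul_assoc]

lemma conj_swap₂ {a b : G} (hab : a * b * a = b * a * b) :
    (a * b * a) * b * (a * b * a)⁻¹ = a := by
  calc (a * b * a) * b * (a * b * a)⁻¹
      = a * (b * a * b) * (a⁻¹ * b⁻¹ * a⁻¹) := by simp [mul_assoc]
    _ = a * (a * b * a) * (a⁻¹ * b⁻¹ * a⁻¹) := by rw [← hab]
    _ = a := by simp [mul_assoc]

lemma comm_core {b x y : G} (hx : b * x * b = x) (hy : b * y * b = y) :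
    b * (x * y) = (x * y) * b := by
  have h1 : b * x = x * b⁻¹ := by rw [eq_mul_inv_iff_mul_eq]; exact hx
  have h2 : b⁻¹ * y = y * b := by
    rw [inv_mul_eq_iff_eq_mul, ← mul_assoc]; exact hy.symm
  rw [← mul_assoc, h1, mul_assoc, h2, ← mul_assoc]

end GroupLemmas

/-- The propagated relation `Rᵢ² = Rᵢ₊₁Rᵢ²Rᵢ₊₁`. -/
lemma relP {n : ℕ} : ∀ i : ℕ, i + 1 < n - 1 →
    gen n i ^ 2 = gen n (i + 1) * gen n i ^ 2 * gen n (i + 1) := by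
  intro i
  induction i with
  | zero => exact fun h => gen_sq0 h
  | succ i ih =>
    intro h
    have hb1 := gen_braid (n := n) i (by omega)
    have hb2 := gen_braid (n := n) (i + 1) h
    have hc := gen_comm (n := n) (i := i) (j := i + 2) (by omega)
    have hp := ih (by omega)
    have h1 := conj_cycle₁ (c := gen n (i + 2)) hb1 hc
    have h2 := conj_cycle₂ (a := gen n i) hb2 hc
    exact conj_sq_rel h1 h2 hp

/-- The reversed relation `Rᵢ₊₁² = RᵢRᵢ₊₁²Rᵢ`. -/
lemma relQ {n : ℕ} (i : ℕ) (h : i + 1 < n - 1) :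
    gen n (i + 1) ^ 2 = gen n i * gen n (i + 1) ^ 2 * gen n i := by
  have hb := gen_braid (n := n) i h
  have h1 := conj_swap₁ hb
  have h2 := conj_swap₂ hb
  exact conj_sq_rel h1 h2 (relP i h)

lemma range_filter_even : ∀ s : ℕ,
    (List.range (2 * s + 1)).filter (fun m => decide (m % 2 = 0)) =
      (List.range (s + 1)).map (fun j => 2 * j) := by
  intro s
  induction s with
  | zero => decide
  | succ s ih =>
    have e1 : 2 * (s + 1) + 1 = (2 * s + 1) + 1 + 1 := by ring
    have o1 : (2 * s + 1) % 2 = 1 := by omega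
    have o2 : (2 * s + 1 + 1) % 2 = 0 := by omega
    have e2 : 2 * s + 1 + 1 = 2 * (s + 1) := by ring
    rw [e1, List.range_succ, List.range_succ, List.filter_append, List.filter_append, ih,
      List.range_succ (n := s + 1), List.map_append]
    simp [o1, o2, e2]

end SpinOctAux

open SpinOctAux in
/-- For even `n`, the statement that the product `R₁²R₃²⋯R_{n-1}²` of the squares of
the odd-indexed generators (taken in increasing order of index; in our `Fin (n-1)`
indexing the paper's `R_{2m+1}` is the generator of index `2m`) is central. -/
theorem stmt_16 (n : ℕ) (hn : 4 ≤ n) (heven : Even n) :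
    (((List.finRange (n - 1)).filter (fun i : Fin (n - 1) => decide ((i : ℕ) % 2 = 0))).map
        (fun i => (PresentedGroup.of (rels := spinOctRels n) i) ^ 2)).prod ∈
      Subgroup.center (PresentedGroup (spinOctRels n)) := by
  obtain ⟨s, hs⟩ := heven
  have hs2 : 2 ≤ s := by omega
  have hN : n - 1 = 2 * (s - 1) + 1 := by omega
  -- rewrite the product as a product over `List.range s`
  have hmapf : (fun i : Fin (n - 1) =>
      (PresentedGroup.of (rels := spinOctRels n) i) ^ 2) = (fun m => gen n m ^ 2) ∘ Fin.val := by
    funext i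
    simp [Function.comp, gen_val]
  have hpred : (fun i : Fin (n - 1) => decide ((i : ℕ) % 2 = 0)) =
      (fun m : ℕ => decide (m % 2 = 0)) ∘ Fin.val := rfl
  have hfilt : (List.range (n - 1)).filter (fun m : ℕ => decide (m % 2 = 0)) =
      (List.range s).map (fun j => 2 * j) := by
    rw [hN, range_filter_even (s - 1), show s - 1 + 1 = s by omega]
  have hlist : ((List.finRange (n - 1)).filter
        (fun i : Fin (n - 1) => decide ((i : ℕ) % 2 = 0))).map
        (fun i => (PresentedGroup.of (rels := spinOctRels n) i) ^ 2) =
      (List.range s).map (fun j => gen n (2 * j) ^ 2) := by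
    rw [hmapf, hpred, ← List.map_map, ← List.filter_map, (show (List.finRange (n - 1)).map Fin.val = List.range (n - 1) from
        List.ext_getElem (by simp) (by simp)), hfilt,
      List.map_map]
    rfl
  rw [hlist]
  set Z := ((List.range s).map (fun j => gen n (2 * j) ^ 2)).prod with hZ
  -- key: Z commutes with every generator
  have key : ∀ k : Fin (n - 1), Commute (PresentedGroup.of (rels := spinOctRels n) k) Z := by
    intro k
    rw [← gen_val]
    have hmN : (k : ℕ) < 2 * (s - 1) + 1 := by rw [← hN]; exact k.isLt
    rcases Nat.even_or_odd (k : ℕ) with ⟨a, ha⟩ | ⟨a, ha⟩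
    · -- even index: commutes with every factor
      apply Commute.list_prod_right
      intro z hz
      rw [List.mem_map] at hz
      obtain ⟨j, hj, rfl⟩ := hz
      rcases lt_trichotomy a j with hlt | heq | hgt
      · have hc : gen n (k : ℕ) * gen n (2 * j) = gen n (2 * j) * gen n (k : ℕ) :=
          gen_comm (by omega)
        exact (show Commute (gen n (k : ℕ)) (gen n (2 * j)) from hc).pow_right 2
      · rw [show (k : ℕ) = 2 * j by omega]
        exact (Commute.refl _).pow_right 2
      · have hc : gen n (2 * j) * gen n (k : ℕ) = gen n (k : ℕ) * gen n (2 * j) :=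
          gen_comm (by omega)
        exact (show Commute (gen n (2 * j)) (gen n (k : ℕ)) from hc).symm.pow_right 2
    · -- odd index
      have hat : a < s - 1 := by omega
      have hsplit : List.range s =
          (List.range a ++ [a, a + 1]) ++ (List.range (s - (a + 2))).map (fun r => a + 2 + r) := by
        conv_lhs => rw [show s = (a + 2) + (s - (a + 2)) by omega]
        rw [List.range_add]
        congr 1
        rw [show a + 2 = (a + 1) + 1 from rfl, List.range_succ, List.range_succ]
        simp
      rw [hZ, hsplit]
      simp only [List.map_append, List.prod_append, List.map_cons, List.map_nil,
        List.prod_cons, List.prod_nil, mul_one]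
      have cA : Commute (gen n (k : ℕ)) ((List.range a).map (fun j => gen n (2 * j) ^ 2)).prod := by
        apply Commute.list_prod_right
        intro z hz
        rw [List.mem_map] at hz
        obtain ⟨j, hj, rfl⟩ := hz
        have hj' : j < a := List.mem_range.mp hj
        have hc : gen n (2 * j) * gen n (k : ℕ) = gen n (k : ℕ) * gen n (2 * j) :=
          gen_comm (by omega)
        exact (show Commute (gen n (2 * j)) (gen n (k : ℕ)) from hc).symm.pow_right 2
      have cB : Commute (gen n (k : ℕ))
          (((List.range (s - (a + 2))).map (fun r => a + 2 + r)).map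
            (fun j => gen n (2 * j) ^ 2)).prod := by
        apply Commute.list_prod_right
        intro z hz
        obtain ⟨j, hj, rfl⟩ := List.mem_map.mp hz
        obtain ⟨r, hr, rfl⟩ := List.mem_map.mp hj
        have hc : gen n (k : ℕ) * gen n (2 * (a + 2 + r)) =
            gen n (2 * (a + 2 + r)) * gen n (k : ℕ) := gen_comm (by omega)
        exact (show Commute (gen n (k : ℕ)) (gen n (2 * (a + 2 + r))) from hc).pow_right 2
      have cxy : Commute (gen n (k : ℕ)) (gen n (2 * a) ^ 2 * gen n (2 * (a + 1)) ^ 2) := by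
        have hP : gen n (k : ℕ) * gen n (2 * a) ^ 2 * gen n (k : ℕ) = gen n (2 * a) ^ 2 := by
          have := (relP (n := n) (2 * a) (by omega)).symm
          rw [show 2 * a + 1 = (k : ℕ) by omega] at this
          exact this
        have hQ : gen n (k : ℕ) * gen n (2 * (a + 1)) ^ 2 * gen n (k : ℕ) =
            gen n (2 * (a + 1)) ^ 2 := by
          have := (relQ (n := n) (2 * a + 1) (by omega)).symm
          rw [show 2 * a + 1 + 1 = 2 * (a + 1) by ring, show 2 * a + 1 = (k : ℕ) by omega] at this
          exact this
        exact comm_core hP hQ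
      exact (cA.mul_right cxy).mul_right cB
  rw [Subgroup.mem_center_iff]
  intro x
  have hx : x ∈ Subgroup.centralizer {Z} := by
    refine PresentedGroup.generated_by _ _ (fun j => ?_) x
    exact Subgroup.mem_centralizer_iff.mpr (fun g hg => by
      rw [Set.mem_singleton_iff] at hg; subst hg; exact (key j).symm)
  exact (Subgroup.mem_centralizer_iff.mp hx Z rfl).symm
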